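/- Define R_0 = 0 and, for i ≥ 1, R_i := Σ_{k=0}^{i−1} (−1)^k (P∘δ)^k ∘ P ∘ (ε∘d)^{k+1}. Then for every integer i ≥ 1, every j ∈ ℤ, and every x ∈ C^{j,−1}: (P∘δ)^i((ε∘d)^i x) = x − R_i(δx) − δ(R_{i−1} x). -/
import Mathlib


/-- `Ψ∘Φ` is homotopic to the identity on simplicial cochains:
with `R_i = Σ_{k<i} (−1)^k (Pδ)^k P (εd)^{k+1}`, one has, on `C^{j,−1}`,
`(Pδ)^i (εd)^i = 1 − R_i δ − δ R_{i−1}`. -/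
theorem PsiPhi_homotopic_id {R M : Type*} [CommRing R] [AddCommGroup M] [Module R M]
    (C : ℤ → ℤ → Submodule R M)
    (hCzero : ∀ j k : ℤ, (j ≤ -2 ∨ k ≤ -2) → C j k = ⊥)
    (d δ' ε P : Module.End R M)
    (hd_map : ∀ j k : ℤ, ∀ x ∈ C j k, d x ∈ C j (k + 1))
    (hδ_map : ∀ j k : ℤ, ∀ x ∈ C j k, δ' x ∈ C (j + 1) k)
    (hε_map : ∀ j k : ℤ, ∀ x ∈ C j k, ε x ∈ C (j - 1) k)
    (hP_map : ∀ j k : ℤ, ∀ x ∈ C j k, P x ∈ C j (k - 1))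
    (hdd : ∀ j k : ℤ, ∀ x ∈ C j k, d (d x) = 0)
    (hδδ : ∀ j k : ℤ, ∀ x ∈ C j k, δ' (δ' x) = 0)
    (hdδ : ∀ j k : ℤ, ∀ x ∈ C j k, d (δ' x) = δ' (d x))
    (hεδ : ∀ j k : ℤ, ∀ x ∈ C j k, ε (δ' x) + δ' (ε x) = x)
    (hdP : ∀ j k : ℤ, ∀ x ∈ C j k, d (P x) + P (d x) = x)
    (Rm : ℕ → Module.End R M)
    (hRm : ∀ i : ℕ, Rm i = ∑ k ∈ Finset.range i,
      ((-1 : ℤ) ^ k) • ((P * δ') ^ k * P * (ε * d) ^ (k + 1)))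
    (i : ℕ) (hi : 1 ≤ i) (j : ℤ) (x : M) (hx : x ∈ C j (-1)) :
    ((P * δ') ^ i) (((ε * d) ^ i) x)
      = x - (Rm i) (δ' x) - δ' ((Rm (i - 1)) x) := by
  -- apply-forms of pow_succ
  have hps : ∀ (f : Module.End R M) (m : ℕ) (z : M), (f ^ (m + 1)) z = (f ^ m) (f z) := by
    intro f m z; rw [pow_succ]; rfl
  have hps' : ∀ (f : Module.End R M) (m : ℕ) (z : M), (f ^ (m + 1)) z = f ((f ^ m) z) := by
    intro f m z; rw [pow_succ']; rfl
  -- everything in a bottom module is zero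
  have hbot : ∀ (a b : ℤ), (a ≤ -2 ∨ b ≤ -2) → ∀ y ∈ C a b, y = (0 : M) := by
    intro a b h y hy
    rw [hCzero a b h] at hy
    simpa using hy
  -- membership for B := ε*d
  have hBmem : ∀ (a b : ℤ) (y : M), y ∈ C a b → (ε * d) y ∈ C (a - 1) (b + 1) := by
    intro a b y hy
    simpa [Module.End.mul_apply] using hε_map a (b + 1) _ (hd_map a b y hy)
  have hBpow : ∀ (k : ℕ) (a b : ℤ) (y : M), y ∈ C a b →
      ((ε * d) ^ k) y ∈ C (a - k) (b + k) := by
    intro k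
    induction k with
    | zero => intro a b y hy; simpa using hy
    | succ n ih =>
      intro a b y hy
      have h1 := ih (a - 1) (b + 1) _ (hBmem a b y hy)
      rw [hps (ε * d) n y]
      convert h1 using 2 <;> push_cast <;> ring
  -- membership for A := P*δ'
  have hAmem : ∀ (a b : ℤ) (y : M), y ∈ C a b → (P * δ') y ∈ C (a + 1) (b - 1) := by
    intro a b y hy
    simpa [Module.End.mul_apply] using hP_map (a + 1) b _ (hδ_map a b y hy)
  have hApow : ∀ (k : ℕ) (a b : ℤ) (y : M), y ∈ C a b →
      ((P * δ') ^ k) y ∈ C (a + k) (b - k) := by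
    intro k
    induction k with
    | zero => intro a b y hy; simpa using hy
    | succ n ih =>
      intro a b y hy
      have h1 := ih (a + 1) (b - 1) _ (hAmem a b y hy)
      rw [hps (P * δ') n y]
      convert h1 using 2 <;> push_cast <;> ring
  -- P d = id on C a (-1)
  have hPd : ∀ (a : ℤ) (y : M), y ∈ C a (-1) → P (d y) = y := by
    intro a y hy
    have h0 : P y = 0 := by
      have hm := hP_map a (-1) y hy
      norm_num at hm
      exact hbot a (-2) (Or.inr le_rfl) _ hm
    have h := hdP a (-1) y hy
    rw [h0, map_zero, zero_add] at h
    exact h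
  -- δ' (B y) = d y - B (δ' y)
  have hδB : ∀ (a b : ℤ) (y : M), y ∈ C a b →
      δ' ((ε * d) y) = d y - (ε * d) (δ' y) := by
    intro a b y hy
    have h1 := hεδ a (b + 1) (d y) (hd_map a b y hy)
    have h2 := hdδ a b y hy
    simp only [Module.End.mul_apply]
    rw [h2, eq_sub_iff_add_eq, add_comm]
    exact h1
  -- δ' (B^(k+1) x) = d (B^k x) + (-1)^(k+1) • B^(k+1) (δ' x)
  have hδBpow : ∀ k : ℕ, δ' (((ε * d) ^ (k + 1)) x)
      = d (((ε * d) ^ k) x) + ((-1 : ℤ) ^ (k + 1)) • ((ε * d) ^ (k + 1)) (δ' x) := by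
    intro k
    induction k with
    | zero =>
      simp only [zero_add, pow_one, pow_zero, Module.End.one_apply]
      rw [hδB j (-1) x hx, neg_one_smul]
      abel
    | succ n ih =>
      have hw : ((ε * d) ^ (n + 1)) x ∈ C (j - (n + 1 : ℕ)) (-1 + (n + 1 : ℕ)) :=
        hBpow (n + 1) j (-1) x hx
      rw [hps' (ε * d) (n + 1) x, hδB _ _ _ hw, ih]
      have hz : (ε * d) (d (((ε * d) ^ n) x)) = 0 := by
        have hzm := hBpow n j (-1) x hx
        have := hdd (j - n) (-1 + n) _ hzm
        simp only [Module.End.mul_apply, this, map_zero]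
      rw [map_add, map_zsmul, hz, ← hps' (ε * d) (n + 1) (δ' x), zero_add]
      have hsign : ((-1 : ℤ) ^ (n + 1 + 1)) = -((-1 : ℤ) ^ (n + 1)) := by ring
      rw [hsign, neg_smul]
      abel
  -- A (d y) = δ' y - d (A y)
  have hAd : ∀ (a b : ℤ) (y : M), y ∈ C a b →
      (P * δ') (d y) = δ' y - d ((P * δ') y) := by
    intro a b y hy
    have h1 := hdP (a + 1) b (δ' y) (hδ_map a b y hy)
    simp only [Module.End.mul_apply]
    rw [← hdδ a b y hy, eq_sub_iff_add_eq, add_comm]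
    exact h1
  -- A^(k+1) (d y) = (-1)^k • δ' (A^k y) - (-1)^k • d (A^(k+1) y)
  have hApowd : ∀ (k : ℕ) (a b : ℤ) (y : M), y ∈ C a b →
      ((P * δ') ^ (k + 1)) (d y)
        = ((-1 : ℤ) ^ k) • δ' (((P * δ') ^ k) y)
          - ((-1 : ℤ) ^ k) • d (((P * δ') ^ (k + 1)) y) := by
    intro k
    induction k with
    | zero =>
      intro a b y hy
      simpa using hAd a b y hy
    | succ n ih =>
      intro a b y hy
      rw [hps (P * δ') (n + 1) (d y), hAd a b y hy, map_sub]
      have hz : ((P * δ') ^ (n + 1)) (δ' y) = 0 := by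
        have h0 : (P * δ') (δ' y) = 0 := by
          simp only [Module.End.mul_apply, hδδ a b y hy, map_zero]
        rw [hps (P * δ') n (δ' y), h0, map_zero]
      have hAy : (P * δ') y ∈ C (a + 1) (b - 1) := hAmem a b y hy
      rw [hz, ih (a + 1) (b - 1) _ hAy, ← hps (P * δ') n y, ← hps (P * δ') (n + 1) y]
      have hsign : ((-1 : ℤ) ^ (n + 1)) = -((-1 : ℤ) ^ n) := by ring
      rw [hsign, neg_smul, neg_smul]
      abel
  -- the telescoping step
  have hstep : ∀ k : ℕ,
      ((P * δ') ^ (k + 1 + 1)) (((ε * d) ^ (k + 1 + 1)) x)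
        = ((P * δ') ^ (k + 1)) (((ε * d) ^ (k + 1)) x)
          - ((-1 : ℤ) ^ k) • δ' (((P * δ') ^ k) (P (((ε * d) ^ (k + 1)) x)))
          - ((-1 : ℤ) ^ (k + 1)) • ((P * δ') ^ (k + 1)) (P (((ε * d) ^ (k + 1 + 1)) (δ' x))) := by
    intro k
    set w : M := ((ε * d) ^ (k + 1)) x with hw_def
    have hw : w ∈ C (j - (k + 1 : ℕ)) (-1 + (k + 1 : ℕ)) := hBpow (k + 1) j (-1) x hx
    -- compute A (B w)
    have hABw : (P * δ') ((ε * d) w)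
        = w - d (P w) - ((-1 : ℤ) ^ (k + 1)) • P (((ε * d) ^ (k + 1 + 1)) (δ' x)) := by
      have h1 : (P * δ') ((ε * d) w) = P (δ' ((ε * d) w)) := rfl
      rw [h1, hδB _ _ _ hw, hw_def, hδBpow k]
      have hPdw : P (d w) = w - d (P w) := by
        have := hdP _ _ w hw
        rw [eq_sub_iff_add_eq, add_comm]
        exact this
      have hBd0 : (ε * d) (d (((ε * d) ^ k) x)) = 0 := by
        have hzm := hBpow k j (-1) x hx
        have := hdd (j - k) (-1 + k) _ hzm
        simp only [Module.End.mul_apply, this, map_zero]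
      rw [map_add, map_zsmul, hBd0, ← hps' (ε * d) (k + 1) (δ' x), zero_add,
        map_sub, map_zsmul, ← hw_def, hPdw]
    rw [hps' (ε * d) (k + 1) x, hps (P * δ') (k + 1) ((ε * d) w), hABw,
      map_sub, map_sub, map_zsmul]
    -- A^{k+1} (d (P w)) = (-1)^k • δ' (A^k (P w))  (the d-term dies in C j (-2))
    have hPw : P w ∈ C (j - (k + 1 : ℕ)) (-1 + (k + 1 : ℕ) - 1) := hP_map _ _ w hw
    have hdead : ((P * δ') ^ (k + 1)) (d (P w))
        = ((-1 : ℤ) ^ k) • δ' (((P * δ') ^ k) (P w)) := by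
      rw [hApowd k _ _ _ hPw]
      have h0 : ((P * δ') ^ (k + 1)) (P w) = 0 := by
        have hm := hApow (k + 1) _ _ _ hPw
        refine hbot _ _ (Or.inr ?_) _ hm
        push_cast
        omega
      rw [h0, map_zero, smul_zero, sub_zero]
    rw [hdead]
  -- main induction
  have main : ∀ n : ℕ, ((P * δ') ^ (n + 1)) (((ε * d) ^ (n + 1)) x)
      = x - (Rm (n + 1)) (δ' x) - δ' ((Rm n) x) := by
    intro n
    induction n with
    | zero =>
      have e1 : ((P * δ') ^ 1) (((ε * d) ^ 1) x) = P (δ' ((ε * d) x)) := by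
        simp [Module.End.mul_apply]
      rw [e1, hδB j (-1) x hx, map_sub, hPd j x hx]
      rw [hRm 0, hRm 1]
      simp [Module.End.mul_apply]
    | succ n ih =>
      rw [hstep n, ih]
      have hR1 : (Rm (n + 1 + 1)) (δ' x) = (Rm (n + 1)) (δ' x)
          + ((-1 : ℤ) ^ (n + 1)) • ((P * δ') ^ (n + 1)) (P (((ε * d) ^ (n + 1 + 1)) (δ' x))) := by
        rw [hRm (n + 1 + 1), Finset.sum_range_succ, ← hRm (n + 1), LinearMap.add_apply,
          LinearMap.smul_apply, Module.End.mul_apply, Module.End.mul_apply]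
      have hR2 : δ' ((Rm (n + 1)) x) = δ' ((Rm n) x)
          + ((-1 : ℤ) ^ n) • δ' (((P * δ') ^ n) (P (((ε * d) ^ (n + 1)) x))) := by
        rw [hRm (n + 1), Finset.sum_range_succ, ← hRm n, LinearMap.add_apply, map_add]
        congr 1
        rw [LinearMap.smul_apply, map_zsmul]
        congr 1
      rw [hR1, hR2]
      abel
  obtain ⟨n, rfl⟩ : ∃ n, i = n + 1 := ⟨i - 1, by omega⟩
  simpa using main n
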